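/- Let m, n, p, q be natural numbers with m ≤ n. Let A be an m×n complex matrix, B an n×m complex matrix, and let H00, H01, H10, H11 be complex matrices of sizes p×p, p×q, q×p, q×q respectively. Then charpoly([[I_m ⊗ H00, A ⊗ H01], [B ⊗ H10, I_n ⊗ H11]]) · (charpoly(H00))^(n−m) = charpoly([[I_n ⊗ H00, B ⊗ H01, ], [A ⊗ H10, I_m ⊗ H11]]) · (charpoly(H11))^(n−m), where the first block matrix has size (m·p+n·q)×(m·p+n·q) and the second has size (n·p+m·q)×(n·p+m·q). -/
import Mathlib

open Matrix Polynomial Kronecker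

private lemma gm_eval_charpoly {ι : Type*} [Fintype ι] [DecidableEq ι]
    (M : Matrix ι ι ℂ) (z : ℂ) :
    (M.charpoly).eval z = (z • (1 : Matrix ι ι ℂ) - M).det := by
  rw [Matrix.charpoly, ← Polynomial.coe_evalRingHom, RingHom.map_det]
  congr 1
  ext i j
  by_cases h : i = j <;>
    simp [h, Matrix.charmatrix_apply, Matrix.one_apply, Matrix.sub_apply]

private lemma gm_factor {k p : ℕ} (M : Matrix (Fin k) (Fin k) ℂ)
    (S W : Matrix (Fin p) (Fin p) ℂ) (hS : IsUnit S.det) :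
    ((1 : Matrix (Fin k) (Fin k) ℂ) ⊗ₖ S - M ⊗ₖ W).det =
      S.det ^ k * ((1 : Matrix (Fin k × Fin p) (Fin k × Fin p) ℂ) - M ⊗ₖ (S⁻¹ * W)).det := by
  have h1 : (1 : Matrix (Fin k) (Fin k) ℂ) ⊗ₖ S - M ⊗ₖ W =
      ((1 : Matrix (Fin k) (Fin k) ℂ) ⊗ₖ S) *
        ((1 : Matrix (Fin k × Fin p) (Fin k × Fin p) ℂ) - M ⊗ₖ (S⁻¹ * W)) := by
    rw [Matrix.mul_sub, Matrix.mul_one, ← Matrix.mul_kronecker_mul, Matrix.one_mul,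
      ← Matrix.mul_assoc, Matrix.mul_nonsing_inv _ hS, Matrix.one_mul]
  rw [h1, Matrix.det_mul, Matrix.det_kronecker]
  simp

private lemma gm_key {m n p : ℕ} (A : Matrix (Fin m) (Fin n) ℂ) (B : Matrix (Fin n) (Fin m) ℂ)
    (S W : Matrix (Fin p) (Fin p) ℂ) (hS : IsUnit S.det) :
    S.det ^ m * ((1 : Matrix (Fin n) (Fin n) ℂ) ⊗ₖ S - (B * A) ⊗ₖ W).det =
      S.det ^ n * ((1 : Matrix (Fin m) (Fin m) ℂ) ⊗ₖ S - (A * B) ⊗ₖ W).det := by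
  have hSkron : IsUnit ((1 : Matrix (Fin m) (Fin m) ℂ) ⊗ₖ S).det := by
    rw [Matrix.det_kronecker]; simpa using hS.pow m
  haveI : Invertible ((1 : Matrix (Fin m) (Fin m) ℂ) ⊗ₖ S) :=
    Matrix.invertibleOfIsUnitDet _ hSkron
  haveI : Invertible (1 : Matrix (Fin n × Fin p) (Fin n × Fin p) ℂ) := invertibleOne
  have hAB : ((1 : Matrix (Fin m) (Fin m) ℂ) ⊗ₖ S - (A * B) ⊗ₖ W).det =
      S.det ^ m * ((1 : Matrix (Fin n × Fin p) (Fin n × Fin p) ℂ) - (B * A) ⊗ₖ (S⁻¹ * W)).det := by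
    have h22 := Matrix.det_fromBlocks₂₂ ((1 : Matrix (Fin m) (Fin m) ℂ) ⊗ₖ S) (A ⊗ₖ W)
      (B ⊗ₖ (1 : Matrix (Fin p) (Fin p) ℂ)) (1 : Matrix (Fin n × Fin p) (Fin n × Fin p) ℂ)
    have h11 := Matrix.det_fromBlocks₁₁ ((1 : Matrix (Fin m) (Fin m) ℂ) ⊗ₖ S) (A ⊗ₖ W)
      (B ⊗ₖ (1 : Matrix (Fin p) (Fin p) ℂ)) (1 : Matrix (Fin n × Fin p) (Fin n × Fin p) ℂ)
    rw [h11] at h22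
    rw [invOf_one, Matrix.mul_one, Matrix.det_one, one_mul,
      ← Matrix.mul_kronecker_mul, Matrix.mul_one] at h22
    rw [Matrix.invOf_eq_nonsing_inv, Matrix.inv_kronecker, inv_one] at h22
    simp only [← Matrix.mul_kronecker_mul, Matrix.mul_one, Matrix.one_mul,
      Matrix.det_kronecker, Matrix.det_one, one_pow, Fintype.card_fin] at h22
    simpa using h22.symm
  have hBA := gm_factor (B * A) S W hS
  rw [hAB, hBA]
  ring

private lemma gm_block {k l p q : ℕ} (A : Matrix (Fin k) (Fin l) ℂ) (B : Matrix (Fin l) (Fin k) ℂ)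
    (H00 : Matrix (Fin p) (Fin p) ℂ) (H01 : Matrix (Fin p) (Fin q) ℂ)
    (H10 : Matrix (Fin q) (Fin p) ℂ) (H11 : Matrix (Fin q) (Fin q) ℂ) (z : ℂ) :
    z • (1 : Matrix ((Fin k × Fin p) ⊕ (Fin l × Fin q)) ((Fin k × Fin p) ⊕ (Fin l × Fin q)) ℂ) -
      Matrix.fromBlocks ((1 : Matrix (Fin k) (Fin k) ℂ) ⊗ₖ H00) (A ⊗ₖ H01)
        (B ⊗ₖ H10) ((1 : Matrix (Fin l) (Fin l) ℂ) ⊗ₖ H11) =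
    Matrix.fromBlocks ((1 : Matrix (Fin k) (Fin k) ℂ) ⊗ₖ (z • 1 - H00)) ((-A) ⊗ₖ H01)
      ((-B) ⊗ₖ H10) ((1 : Matrix (Fin l) (Fin l) ℂ) ⊗ₖ (z • 1 - H11)) := by
  ext (⟨i, a⟩ | ⟨i, a⟩) (⟨j, b⟩ | ⟨j, b⟩) <;>
    simp [Matrix.one_apply, Prod.ext_iff, mul_sub] <;>
    split_ifs <;> simp_all

private lemma gm_schur {k l p q : ℕ} (A : Matrix (Fin k) (Fin l) ℂ) (B : Matrix (Fin l) (Fin k) ℂ)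
    (S0 : Matrix (Fin p) (Fin p) ℂ) (H01 : Matrix (Fin p) (Fin q) ℂ)
    (H10 : Matrix (Fin q) (Fin p) ℂ) (S1 : Matrix (Fin q) (Fin q) ℂ) (h1 : IsUnit S1.det) :
    (Matrix.fromBlocks ((1 : Matrix (Fin k) (Fin k) ℂ) ⊗ₖ S0) ((-A) ⊗ₖ H01)
      ((-B) ⊗ₖ H10) ((1 : Matrix (Fin l) (Fin l) ℂ) ⊗ₖ S1)).det =
    S1.det ^ l *
      ((1 : Matrix (Fin k) (Fin k) ℂ) ⊗ₖ S0 - (A * B) ⊗ₖ (H01 * S1⁻¹ * H10)).det := by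
  haveI : Invertible ((1 : Matrix (Fin l) (Fin l) ℂ) ⊗ₖ S1) :=
    Matrix.invertibleOfIsUnitDet _ (by rw [Matrix.det_kronecker]; simpa using h1.pow l)
  rw [Matrix.det_fromBlocks₂₂, Matrix.invOf_eq_nonsing_inv, Matrix.inv_kronecker, inv_one]
  simp only [← Matrix.mul_kronecker_mul, Matrix.mul_one, Matrix.one_mul, Matrix.neg_mul,
    Matrix.mul_neg, neg_neg, Matrix.det_kronecker, Matrix.det_one, one_pow, Fintype.card_fin]
  ring

private lemma gm_eval_main {m n p q : ℕ} (hmn : m ≤ n)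
    (A : Matrix (Fin m) (Fin n) ℂ) (B : Matrix (Fin n) (Fin m) ℂ)
    (H00 : Matrix (Fin p) (Fin p) ℂ) (H01 : Matrix (Fin p) (Fin q) ℂ)
    (H10 : Matrix (Fin q) (Fin p) ℂ) (H11 : Matrix (Fin q) (Fin q) ℂ) (z : ℂ)
    (h0 : IsUnit (z • (1 : Matrix (Fin p) (Fin p) ℂ) - H00).det)
    (h1 : IsUnit (z • (1 : Matrix (Fin q) (Fin q) ℂ) - H11).det) :
    (z • (1 : Matrix ((Fin m × Fin p) ⊕ (Fin n × Fin q)) ((Fin m × Fin p) ⊕ (Fin n × Fin q)) ℂ) -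
        Matrix.fromBlocks ((1 : Matrix (Fin m) (Fin m) ℂ) ⊗ₖ H00) (A ⊗ₖ H01)
          (B ⊗ₖ H10) ((1 : Matrix (Fin n) (Fin n) ℂ) ⊗ₖ H11)).det *
      (z • (1 : Matrix (Fin p) (Fin p) ℂ) - H00).det ^ (n - m) =
    (z • (1 : Matrix ((Fin n × Fin p) ⊕ (Fin m × Fin q)) ((Fin n × Fin p) ⊕ (Fin m × Fin q)) ℂ) -
        Matrix.fromBlocks ((1 : Matrix (Fin n) (Fin n) ℂ) ⊗ₖ H00) (B ⊗ₖ H01)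
          (A ⊗ₖ H10) ((1 : Matrix (Fin m) (Fin m) ℂ) ⊗ₖ H11)).det *
      (z • (1 : Matrix (Fin q) (Fin q) ℂ) - H11).det ^ (n - m) := by
  set S0 := z • (1 : Matrix (Fin p) (Fin p) ℂ) - H00 with hS0
  set S1 := z • (1 : Matrix (Fin q) (Fin q) ℂ) - H11 with hS1
  rw [gm_block A B H00 H01 H10 H11 z, gm_block B A H00 H01 H10 H11 z, ← hS0, ← hS1,
    gm_schur A B S0 H01 H10 S1 h1, gm_schur B A S0 H01 H10 S1 h1]
  obtain ⟨d, rfl⟩ := Nat.exists_eq_add_of_le hmn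
  have key := gm_key A B S0 (H01 * S1⁻¹ * H10) h0
  have ha : S0.det ≠ 0 := h0.ne_zero
  have hY : ((1 : Matrix (Fin (m + d)) (Fin (m + d)) ℂ) ⊗ₖ S0 -
      (B * A) ⊗ₖ (H01 * S1⁻¹ * H10)).det =
      S0.det ^ d * ((1 : Matrix (Fin m) (Fin m) ℂ) ⊗ₖ S0 -
        (A * B) ⊗ₖ (H01 * S1⁻¹ * H10)).det := by
    apply mul_left_cancel₀ (pow_ne_zero m ha)
    rw [key, pow_add]
    ring
  rw [hY, Nat.add_sub_cancel_left, pow_add]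
  ring

theorem stmt5 (m n p q : ℕ) (hmn : m ≤ n)
    (A : Matrix (Fin m) (Fin n) ℂ) (B : Matrix (Fin n) (Fin m) ℂ)
    (H00 : Matrix (Fin p) (Fin p) ℂ) (H01 : Matrix (Fin p) (Fin q) ℂ)
    (H10 : Matrix (Fin q) (Fin p) ℂ) (H11 : Matrix (Fin q) (Fin q) ℂ) :
    (Matrix.fromBlocks ((1 : Matrix (Fin m) (Fin m) ℂ) ⊗ₖ H00) (A ⊗ₖ H01)
        (B ⊗ₖ H10) ((1 : Matrix (Fin n) (Fin n) ℂ) ⊗ₖ H11)).charpoly *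
      H00.charpoly ^ (n - m) =
    (Matrix.fromBlocks ((1 : Matrix (Fin n) (Fin n) ℂ) ⊗ₖ H00) (B ⊗ₖ H01)
        (A ⊗ₖ H10) ((1 : Matrix (Fin m) (Fin m) ℂ) ⊗ₖ H11)).charpoly *
      H11.charpoly ^ (n - m) := by
  have hfin : Set.Finite ({z : ℂ | H00.charpoly.IsRoot z} ∪ {z : ℂ | H11.charpoly.IsRoot z}) :=
    (Polynomial.finite_setOf_isRoot (H00.charpoly_monic.ne_zero)).union
      (Polynomial.finite_setOf_isRoot (H11.charpoly_monic.ne_zero))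
  refine Polynomial.eq_of_infinite_eval_eq _ _ (Set.Infinite.mono ?_ hfin.infinite_compl)
  intro z hz
  simp only [Set.mem_compl_iff, Set.mem_union, not_or, Set.mem_setOf_eq] at hz
  obtain ⟨hz0, hz1⟩ := hz
  have h0 : IsUnit (z • (1 : Matrix (Fin p) (Fin p) ℂ) - H00).det :=
    isUnit_iff_ne_zero.mpr (by rw [← gm_eval_charpoly]; exact hz0)
  have h1 : IsUnit (z • (1 : Matrix (Fin q) (Fin q) ℂ) - H11).det :=
    isUnit_iff_ne_zero.mpr (by rw [← gm_eval_charpoly]; exact hz1)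
  show Polynomial.eval z _ = Polynomial.eval z _
  rw [Polynomial.eval_mul, Polynomial.eval_mul, Polynomial.eval_pow, Polynomial.eval_pow,
    gm_eval_charpoly, gm_eval_charpoly, gm_eval_charpoly, gm_eval_charpoly]
  exact gm_eval_main hmn A B H00 H01 H10 H11 z h0 h1
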